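/- Let φ : ℝ → (ℝ³ → ℝ³) satisfy φ 0 = id and the composition rule φ(2t−1) = φ(t) ∘ φ(t−1) = φ(t−1) ∘ φ(t) for all t ∈ [0,1]. Then for every s ∈ [−1,1], every n ≥ 1, and every level-n expansion list L = [s₁, s₂, …, s_{2ⁿ}] ∈ Ex(n, s), the composition φ(s₁) ∘ φ(s₂) ∘ ⋯ ∘ φ(s_{2ⁿ}) equals φ(s). In particular, taking s = 0, every level-n expansion of 0 composes to the identity map. -/

import Mathlib

/-- One-step expansion of a list of reals: each entry `x` is replaced by the two
entries `(x+1)/2` and `(x-1)/2`, placed in either order. -/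
inductive ExpandStep : List ℝ → List ℝ → Prop
  | nil : ExpandStep [] []
  | cons_lr (x : ℝ) {L L' : List ℝ} (h : ExpandStep L L') :
      ExpandStep (x :: L) ((x + 1) / 2 :: (x - 1) / 2 :: L')
  | cons_rl (x : ℝ) {L L' : List ℝ} (h : ExpandStep L L') :
      ExpandStep (x :: L) ((x - 1) / 2 :: (x + 1) / 2 :: L')

/-- `ExpandN n L L'` : `L'` is obtained from `L` by `n` successive one-step
expansions. -/
inductive ExpandN : ℕ → List ℝ → List ℝ → Prop
  | zero (L : List ℝ) : ExpandN 0 L L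
  | succ {n : ℕ} {L L' L'' : List ℝ} (h : ExpandN n L L') (h' : ExpandStep L' L'') :
      ExpandN (n + 1) L L''

/-- `Ex n s`: the set of lists obtainable from the singleton list `[s]` by `n`
successive one-step expansions. -/
def Ex (n : ℕ) (s : ℝ) : Set (List ℝ) := {L | ExpandN n [s] L}

/-- **Binary-tree expansion identity (Eq. 16 and Eq. 17).** If `φ 0 = id` and
`φ (2t−1) = φ t ∘ φ (t−1) = φ (t−1) ∘ φ t` for all `t ∈ [0,1]`, then for every
`s ∈ [−1,1]`, every `n ≥ 1`, and every level-`n` expansion list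
`L = [s₁, …, s_{2ⁿ}] ∈ Ex n s`, the composition `φ s₁ ∘ φ s₂ ∘ ⋯ ∘ φ s_{2ⁿ}`
equals `φ s`; in particular every level-`n` expansion of `0` composes to the
identity map. -/
theorem expansion_composes_to_endpoint
    (φ : ℝ → ((Fin 3 → ℝ) → (Fin 3 → ℝ)))
    (h0 : φ 0 = id)
    (hcomp : ∀ t ∈ Set.Icc (0 : ℝ) 1,
      φ (2 * t - 1) = φ t ∘ φ (t - 1) ∧ φ (2 * t - 1) = φ (t - 1) ∘ φ t) :
    ∀ s ∈ Set.Icc (-1 : ℝ) 1, ∀ n : ℕ, 1 ≤ n → ∀ L ∈ Ex n s,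
      (L.map φ).foldr (· ∘ ·) id = φ s := by
  -- key single-point identity: for x ∈ [-1,1], φ x = φ ((x+1)/2) ∘ φ ((x-1)/2) etc.
  have key : ∀ x ∈ Set.Icc (-1 : ℝ) 1,
      φ x = φ ((x + 1) / 2) ∘ φ ((x - 1) / 2) ∧
      φ x = φ ((x - 1) / 2) ∘ φ ((x + 1) / 2) := by
    intro x hx
    have ht : (x + 1) / 2 ∈ Set.Icc (0 : ℝ) 1 := by
      constructor <;> [linarith [hx.1]; linarith [hx.2]]
    have h := hcomp _ ht
    have e1 : 2 * ((x + 1) / 2) - 1 = x := by ring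
    have e2 : (x + 1) / 2 - 1 = (x - 1) / 2 := by ring
    rw [e1, e2] at h
    exact h
  -- membership bound preserved
  have memstep : ∀ {L L' : List ℝ}, ExpandStep L L' →
      (∀ x ∈ L, x ∈ Set.Icc (-1 : ℝ) 1) → (∀ x ∈ L', x ∈ Set.Icc (-1 : ℝ) 1) := by
    intro L L' h
    induction h with
    | nil => intro h x hx; exact absurd hx List.not_mem_nil
    | cons_lr x h ih =>
        intro hmem y hy
        have hx := hmem x List.mem_cons_self
        simp only [List.mem_cons] at hy
        rcases hy with rfl | rfl | hy
        · constructor <;> [linarith [hx.1]; linarith [hx.2]]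
        · constructor <;> [linarith [hx.1]; linarith [hx.2]]
        · exact ih (fun z hz => hmem z (List.mem_cons_of_mem _ hz)) y hy
    | cons_rl x h ih =>
        intro hmem y hy
        have hx := hmem x List.mem_cons_self
        simp only [List.mem_cons] at hy
        rcases hy with rfl | rfl | hy
        · constructor <;> [linarith [hx.1]; linarith [hx.2]]
        · constructor <;> [linarith [hx.1]; linarith [hx.2]]
        · exact ih (fun z hz => hmem z (List.mem_cons_of_mem _ hz)) y hy
  -- fold preserved under one step
  have foldstep : ∀ {L L' : List ℝ}, ExpandStep L L' →
      (∀ x ∈ L, x ∈ Set.Icc (-1 : ℝ) 1) →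
      (L'.map φ).foldr (· ∘ ·) id = (L.map φ).foldr (· ∘ ·) id := by
    intro L L' h
    induction h with
    | nil => intro _; rfl
    | cons_lr x h ih =>
        intro hmem
        have hx := hmem x List.mem_cons_self
        simp only [List.map_cons, List.foldr_cons,
          ih (fun z hz => hmem z (List.mem_cons_of_mem _ hz))]
        rw [(key x hx).1]
        rfl
    | cons_rl x h ih =>
        intro hmem
        have hx := hmem x List.mem_cons_self
        simp only [List.map_cons, List.foldr_cons,
          ih (fun z hz => hmem z (List.mem_cons_of_mem _ hz))]
        rw [(key x hx).2]
        rfl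
  -- main induction on ExpandN
  have main : ∀ (n : ℕ) (L L' : List ℝ), ExpandN n L L' →
      (∀ x ∈ L, x ∈ Set.Icc (-1 : ℝ) 1) →
      (L'.map φ).foldr (· ∘ ·) id = (L.map φ).foldr (· ∘ ·) id ∧
      (∀ x ∈ L', x ∈ Set.Icc (-1 : ℝ) 1) := by
    intro n L L' h
    induction h with
    | zero L => exact fun hm => ⟨rfl, hm⟩
    | succ h h' ih =>
        intro hm
        obtain ⟨e, hm'⟩ := ih hm
        exact ⟨(foldstep h' hm').trans e, memstep h' hm'⟩
  intro s hs n _ L hL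
  have := (main n [s] L hL (by intro x hx; simp at hx; subst hx; exact hs)).1
  simpa using this
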